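/- For faces τ ⊆ γ of σ, one has (γ^∨ ∩ τ^⊥)/γ^⊥ = ((σ^∨ + γ^⊥) ∩ τ^⊥)/γ^⊥ = (σ^∨ ∩ τ^⊥ + γ^⊥)/γ^⊥, and this set is isomorphic to (σ^∨ ∩ τ^⊥)/(σ^∨ ∩ τ^⊥ ∩ γ^⊥) via the second isomorphism theorem for the additive structure. -/

import Mathlib

open scoped Pointwise

/-- The dual cone of a set `S` in Euclidean space. -/
def dualSet {d : ℕ} (S : Set (EuclideanSpace ℝ (Fin d))) : Set (EuclideanSpace ℝ (Fin d)) :=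
  {y | ∀ x ∈ S, 0 ≤ (inner ℝ y x : ℝ)}

/-- The annihilator `S^⊥` of a set `S`. -/
def perpSet {d : ℕ} (S : Set (EuclideanSpace ℝ (Fin d))) : Set (EuclideanSpace ℝ (Fin d)) :=
  {y | ∀ x ∈ S, (inner ℝ y x : ℝ) = 0}

/-- `σ` is a polyhedral cone. -/
def IsPolyCone {d : ℕ} (σ : Set (EuclideanSpace ℝ (Fin d))) : Prop :=
  ∃ (m : ℕ) (g : Fin m → EuclideanSpace ℝ (Fin d)),
    σ = {x | ∃ c : Fin m → ℝ, (∀ i, 0 ≤ c i) ∧ x = ∑ i, c i • g i}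

/-- `γ` is a face of `σ`. -/
def IsFaceOf {d : ℕ} (σ γ : Set (EuclideanSpace ℝ (Fin d))) : Prop :=
  ∃ u ∈ dualSet σ, γ = σ ∩ {x | (inner ℝ u x : ℝ) = 0}

lemma perpSet_eq_orthogonal {d : ℕ} (S : Set (EuclideanSpace ℝ (Fin d))) :
    perpSet S = ((Submodule.span ℝ S)ᗮ : Set (EuclideanSpace ℝ (Fin d))) := by
  ext y
  simp only [perpSet, Set.mem_setOf_eq, SetLike.mem_coe, Submodule.mem_orthogonal']
  constructor
  · intro h u hu
    induction hu using Submodule.span_induction with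
    | mem x hx => exact h x hx
    | zero => simp
    | add x z _ _ hx hz => rw [inner_add_right, hx, hz, add_zero]
    | smul c x _ hx => rw [real_inner_smul_right, hx, mul_zero]
  · intro h x hx
    exact h x (Submodule.subset_span hx)

/-- For faces `τ ⊆ γ` of a polyhedral cone `σ`, one has, inside `τ^⊥/γ^⊥`,
`(γ^∨ ∩ τ^⊥)/γ^⊥ = ((σ^∨ + γ^⊥) ∩ τ^⊥)/γ^⊥ = (σ^∨ ∩ τ^⊥ + γ^⊥)/γ^⊥`, and this set is
isomorphic to `(σ^∨ ∩ τ^⊥)/(σ^∨ ∩ τ^⊥ ∩ γ^⊥)` via the second isomorphism theorem for the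
additive structure. -/
theorem quotient_cone_identities {d : ℕ} (σ τ γ : Set (EuclideanSpace ℝ (Fin d)))
    (hσ : IsPolyCone σ) (hτ : IsFaceOf σ τ) (hγ : IsFaceOf σ γ) (hτγ : τ ⊆ γ) :
    ((Submodule.span ℝ γ)ᗮ).mkQ '' (dualSet γ ∩ perpSet τ) =
      ((Submodule.span ℝ γ)ᗮ).mkQ '' ((dualSet σ + perpSet γ) ∩ perpSet τ) ∧
    ((Submodule.span ℝ γ)ᗮ).mkQ '' ((dualSet σ + perpSet γ) ∩ perpSet τ) =
      ((Submodule.span ℝ γ)ᗮ).mkQ '' (dualSet σ ∩ perpSet τ + perpSet γ) ∧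
    ∃ f : Quot (fun x y : {v : EuclideanSpace ℝ (Fin d) // v ∈ dualSet σ ∩ perpSet τ} =>
          (x : EuclideanSpace ℝ (Fin d)) - y ∈ (Submodule.span ℝ γ)ᗮ) ≃
        (((Submodule.span ℝ γ)ᗮ).mkQ '' (dualSet γ ∩ perpSet τ) : Set _),
      ∀ x : {v : EuclideanSpace ℝ (Fin d) // v ∈ dualSet σ ∩ perpSet τ},
        (f (Quot.mk _ x) : EuclideanSpace ℝ (Fin d) ⧸ (Submodule.span ℝ γ)ᗮ) =
          ((Submodule.span ℝ γ)ᗮ).mkQ x :=by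
  obtain ⟨m, g, hσg⟩ := hσ
  obtain ⟨u, hu, hγu⟩ := hγ
  -- basic facts
  have hg : ∀ i, g i ∈ σ := by
    intro i
    rw [hσg]
    refine ⟨fun j => if j = i then 1 else 0, fun j => by positivity, ?_⟩
    simp [ite_smul]
  have hγσ : γ ⊆ σ := by rw [hγu]; exact Set.inter_subset_left
  have huγ : u ∈ perpSet γ := by
    intro x hx
    rw [hγu] at hx
    exact hx.2
  have hτσ : τ ⊆ σ := hτγ.trans hγσ
  -- perpSet γ is a subspace (as a set)
  have hperp_sub : ∀ {S : Set (EuclideanSpace ℝ (Fin d))}, ∀ {a b : EuclideanSpace ℝ (Fin d)},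
      a ∈ perpSet S → b ∈ perpSet S → a + b ∈ perpSet S := by
    intro S a b ha hb x hx
    rw [inner_add_left, ha x hx, hb x hx, add_zero]
  have hperp_smul : ∀ {S : Set (EuclideanSpace ℝ (Fin d))}, ∀ (c : ℝ),
      ∀ {a : EuclideanSpace ℝ (Fin d)}, a ∈ perpSet S → c • a ∈ perpSet S := by
    intro S c a ha x hx
    rw [real_inner_smul_left, ha x hx, mul_zero]
  have hperp_mono : perpSet γ ⊆ perpSet τ := fun a ha x hx => ha x (hτγ hx)
  have hperp_dual : perpSet γ ⊆ dualSet γ := fun a ha x hx => le_of_eq (ha x hx).symm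
  have hdual_mono : dualSet σ ⊆ dualSet γ := fun a ha x hx => ha x (hγσ hx)
  have hdual_add : ∀ {a b : EuclideanSpace ℝ (Fin d)},
      a ∈ dualSet γ → b ∈ dualSet γ → a + b ∈ dualSet γ := by
    intro a b ha hb x hx
    rw [inner_add_left]
    exact add_nonneg (ha x hx) (hb x hx)
  -- key: dual of face
  have key : dualSet γ ∩ perpSet τ ⊆ dualSet σ ∩ perpSet τ + perpSet γ := by
    rintro w ⟨hw, hwτ⟩
    set n : ℝ := ∑ i, if 0 < (inner ℝ u (g i) : ℝ) then
        max 0 (-(inner ℝ w (g i) : ℝ) / (inner ℝ u (g i) : ℝ)) else 0 with hn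
    have hterm : ∀ i, (0:ℝ) ≤ if 0 < (inner ℝ u (g i) : ℝ) then
        max 0 (-(inner ℝ w (g i) : ℝ) / (inner ℝ u (g i) : ℝ)) else 0 := by
      intro i; split <;> simp [le_max_left]
    have hni : ∀ i, (if 0 < (inner ℝ u (g i) : ℝ) then
        max 0 (-(inner ℝ w (g i) : ℝ) / (inner ℝ u (g i) : ℝ)) else 0) ≤ n := by
      intro i
      exact Finset.single_le_sum (fun j _ => hterm j) (Finset.mem_univ i)
    have hgen : ∀ i, 0 ≤ (inner ℝ w (g i) : ℝ) + n * (inner ℝ u (g i) : ℝ) := by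
      intro i
      rcases lt_or_eq_of_le (hu (g i) (hg i)) with hpos | hzero
      · have h1 : max 0 (-(inner ℝ w (g i) : ℝ) / (inner ℝ u (g i) : ℝ)) ≤ n := by
          have := hni i; rwa [if_pos hpos] at this
        have h2 : -(inner ℝ w (g i) : ℝ) / (inner ℝ u (g i) : ℝ) ≤ n :=
          le_trans (le_max_right _ _) h1
        have h3 : -(inner ℝ w (g i) : ℝ) ≤ n * (inner ℝ u (g i) : ℝ) := by
          rw [div_le_iff₀ hpos] at h2; linarith
        linarith
      · have hgγ : g i ∈ γ := by
          rw [hγu]; exact ⟨hg i, hzero.symm⟩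
        have := hw (g i) hgγ
        rw [← hzero]
        simpa using this
    have hwu : w + n • u ∈ dualSet σ := by
      intro x hx
      rw [hσg] at hx
      obtain ⟨c, hc, rfl⟩ := hx
      rw [inner_sum]
      refine Finset.sum_nonneg fun i _ => ?_
      rw [real_inner_smul_right]
      refine mul_nonneg (hc i) ?_
      rw [inner_add_left, real_inner_smul_left]
      exact hgen i
    have huτ : u ∈ perpSet τ := hperp_mono huγ
    refine ⟨w + n • u, ⟨hwu, hperp_sub hwτ (hperp_smul n huτ)⟩, (-n) • u,
      hperp_smul (-n) huγ, by module⟩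
  have keyrev : dualSet σ ∩ perpSet τ + perpSet γ ⊆ dualSet γ ∩ perpSet τ := by
    rintro _ ⟨s, ⟨hs, hsτ⟩, p, hp, rfl⟩
    exact ⟨hdual_add (hdual_mono hs) (hperp_dual hp), hperp_sub hsτ (hperp_mono hp)⟩
  have eqAC : dualSet γ ∩ perpSet τ = dualSet σ ∩ perpSet τ + perpSet γ :=
    Set.Subset.antisymm key keyrev
  have eqBC : (dualSet σ + perpSet γ) ∩ perpSet τ = dualSet σ ∩ perpSet τ + perpSet γ := by
    apply Set.Subset.antisymm
    · rintro x ⟨⟨s, hs, p, hp, rfl⟩, hxτ⟩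
      have hpτ : p ∈ perpSet τ := hperp_mono hp
      have hsτ : s ∈ perpSet τ := by
        intro y hy
        have h1 := hxτ y hy
        have h2 := hpτ y hy
        rw [inner_add_left, h2, add_zero] at h1
        exact h1
      exact ⟨s, ⟨hs, hsτ⟩, p, hp, rfl⟩
    · rintro _ ⟨s, ⟨hs, hsτ⟩, p, hp, rfl⟩
      exact ⟨⟨s, hs, p, hp, rfl⟩, hperp_sub hsτ (hperp_mono hp)⟩
  refine ⟨by rw [eqAC, eqBC], by rw [eqBC], ?_⟩
  -- image equality
  have hpK : perpSet γ = ((Submodule.span ℝ γ)ᗮ : Set _) := perpSet_eq_orthogonal γ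
  have himg : ((Submodule.span ℝ γ)ᗮ).mkQ '' (dualSet γ ∩ perpSet τ) =
      ((Submodule.span ℝ γ)ᗮ).mkQ '' (dualSet σ ∩ perpSet τ) := by
    rw [eqAC]
    apply Set.Subset.antisymm
    · rintro _ ⟨_, ⟨s, hs, p, hp, rfl⟩, rfl⟩
      refine ⟨s, hs, ?_⟩
      rw [map_add]
      have hz : ((Submodule.span ℝ γ)ᗮ).mkQ p = 0 := by
        rw [Submodule.mkQ_apply, Submodule.Quotient.mk_eq_zero]
        rw [hpK] at hp; exact hp
      rw [hz, add_zero]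
    · rintro _ ⟨s, hs, rfl⟩
      refine ⟨s, ⟨s, hs, 0, ?_, by simp⟩, rfl⟩
      rw [hpK]
      exact Submodule.zero_mem _
  -- the equivalence
  have hmem : ∀ x : {v : EuclideanSpace ℝ (Fin d) // v ∈ dualSet σ ∩ perpSet τ},
      ((Submodule.span ℝ γ)ᗮ).mkQ (x : EuclideanSpace ℝ (Fin d)) ∈
        ((Submodule.span ℝ γ)ᗮ).mkQ '' (dualSet γ ∩ perpSet τ) := by
    intro x
    rw [himg]
    exact ⟨x, x.2, rfl⟩
  let f₀ : {v : EuclideanSpace ℝ (Fin d) // v ∈ dualSet σ ∩ perpSet τ} →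
      (((Submodule.span ℝ γ)ᗮ).mkQ '' (dualSet γ ∩ perpSet τ) : Set _) :=
    fun x => ⟨((Submodule.span ℝ γ)ᗮ).mkQ (x : EuclideanSpace ℝ (Fin d)), hmem x⟩
  have hresp : ∀ x y : {v : EuclideanSpace ℝ (Fin d) // v ∈ dualSet σ ∩ perpSet τ},
      ((x : EuclideanSpace ℝ (Fin d)) - y ∈ (Submodule.span ℝ γ)ᗮ) → f₀ x = f₀ y := by
    intro x y hxy
    apply Subtype.ext
    show ((Submodule.span ℝ γ)ᗮ).mkQ _ = ((Submodule.span ℝ γ)ᗮ).mkQ _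
    rw [Submodule.mkQ_apply, Submodule.mkQ_apply]
    exact (Submodule.Quotient.eq _).mpr hxy
  have hbij : Function.Bijective (Quot.lift f₀ hresp) := by
    constructor
    · intro a b
      induction a using Quot.ind with | _ x =>
      induction b using Quot.ind with | _ y =>
      intro hab
      apply Quot.sound
      have h : ((Submodule.span ℝ γ)ᗮ).mkQ (x : EuclideanSpace ℝ (Fin d)) =
          ((Submodule.span ℝ γ)ᗮ).mkQ (y : EuclideanSpace ℝ (Fin d)) := Subtype.ext_iff.mp hab
      rw [Submodule.mkQ_apply, Submodule.mkQ_apply] at h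
      exact (Submodule.Quotient.eq _).mp h
    · rintro ⟨q, hq⟩
      rw [himg] at hq
      obtain ⟨x, hx, rfl⟩ := hq
      exact ⟨Quot.mk _ ⟨x, hx⟩, rfl⟩
  exact ⟨Equiv.ofBijective _ hbij, fun x => by rw [Equiv.ofBijective_apply]⟩
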